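/- For every integer l with 0 ≤ l ≤ k and every x ∈ {l+1,...,n}, one has l · r_l(x) = r_{l-1}(x-1) - r_{l-1}(x) (with r_{-1} := 0). -/

import Mathlib

open Finset

namespace Secretary

/-- Binomial coefficient on integers: zero when `b < 0` or `b > a`. -/
noncomputable def Cb (a b : ℤ) : ℝ :=
  if 0 ≤ b ∧ b ≤ a then (Nat.choose a.toNat b.toNat : ℝ) else 0
lemma Cb_nat (a b : ℕ) : Cb a b = (a.choose b : ℝ) := by
  unfold Cb
  split_ifs with h
  · simp
  · push_neg at h
    simp only [Int.natCast_nonneg, true_implies] at h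
    rw [Nat.choose_eq_zero_of_lt (by exact_mod_cast h)]
    simp

lemma Cb_neg (a b : ℤ) (hb : b < 0) : Cb a b = 0 := by
  unfold Cb; rw [if_neg]; rintro ⟨h1, -⟩; omega

lemma Cb_zero_of_lt (a b : ℤ) (h : a < b) : Cb a b = 0 := by
  unfold Cb; rw [if_neg]; rintro ⟨-, h2⟩; omega

lemma Cb_natInt (a : ℕ) (b : ℤ) (hb : 0 ≤ b) : Cb a b = (a.choose b.toNat : ℝ) := by
  have := Cb_nat a b.toNat
  rwa [Int.toNat_of_nonneg hb] at this

-- absorption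
lemma Cb_absorb (m : ℕ) (y : ℤ) :
    ((m : ℝ) - y + 1) * Cb m (y - 1) = (y : ℝ) * Cb m y := by
  rcases lt_or_ge y 1 with hy | hy
  · rw [Cb_neg _ _ (by omega)]
    rcases lt_or_ge y 0 with h0 | h0
    · rw [Cb_neg _ _ h0]; ring
    · have : y = 0 := by omega
      subst this; simp
  · rcases le_or_gt y m with hym | hym
    · -- 1 ≤ y ≤ m
      set t := y.toNat with ht
      have hyt : y = (t : ℤ) := by omega
      have ht1 : 1 ≤ t := by omega
      have htm : t ≤ m := by omega
      rw [hyt, show ((t:ℤ) - 1) = ((t - 1 : ℕ) : ℤ) by omega,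
        Cb_natInt _ _ (by positivity), Cb_natInt _ _ (by positivity)]
      simp only [Int.toNat_natCast]
      have h0 := Nat.choose_succ_right_eq m (t - 1)
      rw [show t - 1 + 1 = t by omega, show m - (t-1) = m - t + 1 by omega] at h0
      have hcast : (m.choose t : ℝ) * t = (m.choose (t-1) : ℝ) * (((m - t : ℕ) : ℝ) + 1) := by
        exact_mod_cast h0
      rw [Nat.cast_sub htm] at hcast
      push_cast
      linear_combination -hcast
    · rcases eq_or_lt_of_le (show (m : ℤ) + 1 ≤ y by omega) with h | h
      · have hy' : y = (m : ℤ) + 1 := h.symm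
        subst hy'
        rw [Cb_zero_of_lt (m:ℤ) ((m:ℤ)+1) (by omega)]
        push_cast
        ring
      · rw [Cb_zero_of_lt _ _ (by omega), Cb_zero_of_lt _ _ (by omega)]; ring

lemma Cb_pos (a b : ℕ) (h : b ≤ a) : 0 < Cb a b := by
  rw [Cb_nat]; exact_mod_cast Nat.choose_pos h

lemma choose_real (a b : ℕ) (h : b ≤ a) :
    (a.choose b : ℝ) = (a.factorial : ℝ) / ((b.factorial : ℝ) * ((a-b).factorial : ℝ)) := by
  rw [eq_div_iff (by positivity), ← mul_assoc]
  exact_mod_cast Nat.choose_mul_factorial_mul_factorial h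

lemma Cb_succ_right (k j : ℕ) (h : j < k) :
    ((k:ℝ) - j) * Cb k j = ((j:ℝ)+1) * Cb k (j+1) := by
  rw [show ((j:ℤ)+1) = ((j+1:ℕ):ℤ) by push_cast; ring, Cb_nat, Cb_nat]
  have h0 := Nat.choose_succ_right_eq k j
  have hc : (k.choose (j+1) : ℝ) * ((j:ℝ)+1) = (k.choose j : ℝ) * (((k - j : ℕ)):ℝ) := by
    exact_mod_cast h0
  rw [Nat.cast_sub h.le] at hc
  linear_combination -hc

lemma Cb_prod (n k x : ℕ) (hk : k ≤ n) (hx : x ≤ n) :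
    Cb ((n:ℤ)-k) x * Cb n k = Cb ((n:ℤ)-x) k * Cb n x := by
  rw [show (n:ℤ)-k = ((n-k:ℕ):ℤ) by omega, show (n:ℤ)-x = ((n-x:ℕ):ℤ) by omega,
    Cb_nat, Cb_nat, Cb_nat, Cb_nat]
  rcases le_or_gt x (n-k) with h | h
  · have hkx : k ≤ n - x := by omega
    rw [choose_real _ _ h, choose_real _ _ hk, choose_real _ _ hkx, choose_real _ _ hx,
      show n - k - x = n - x - k by omega]
    have f1 := Nat.factorial_pos (n-k)
    have f2 := Nat.factorial_pos (n-x)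
    have f3 := Nat.factorial_pos k
    have f4 := Nat.factorial_pos x
    have f5 := Nat.factorial_pos (n-x-k)
    field_simp
  · rw [Nat.choose_eq_zero_of_lt h, Nat.choose_eq_zero_of_lt (show n - x < k by omega)]
    simp

lemma Cb_pascal (n k x : ℕ) (hk : 1 ≤ k) (hx : x ≤ n) :
    Cb ((n:ℤ)-x-1) k + Cb ((n:ℤ)-x-1) ((k:ℤ)-1) = Cb ((n:ℤ)-x) k := by
  rcases eq_or_lt_of_le hx with h | h
  · subst h
    rw [show (x:ℤ)-x-1 = -1 by ring, show (x:ℤ)-x = 0 by ring,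
      Cb_zero_of_lt _ _ (by omega), Cb_zero_of_lt _ _ (by omega),
      Cb_zero_of_lt _ _ (by omega)]
    ring
  · rw [show (n:ℤ)-x-1 = ((n-x-1:ℕ):ℤ) by omega, show (n:ℤ)-x = ((n-x-1:ℕ)+1:ℕ) by omega,
      show (k:ℤ)-1 = ((k-1:ℕ):ℤ) by omega, Cb_nat, Cb_nat, Cb_nat]
    have := Nat.choose_succ_succ' (n-x-1) (k-1)
    rw [show k - 1 + 1 = k by omega] at this
    rw [this]
    push_cast
    ring

open Finset in
lemma sumT (n k l x : ℕ) (hk : k < n) (hl1 : 1 ≤ l) (hlk : l ≤ k) :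
    ((l:ℝ)-1) * ∑ j ∈ range (l+1), (((l:ℝ)-j) * Cb k j * Cb ((n:ℤ)-k) ((x:ℤ)-j))
      = ((n:ℝ)-x+1) * ∑ j ∈ range l, ((((l:ℝ)-1)-j) * Cb k j * Cb ((n:ℤ)-k) (((x:ℤ)-1)-j))
        - ((x:ℝ)-l) * ∑ j ∈ range l, ((((l:ℝ)-1)-j) * Cb k j * Cb ((n:ℤ)-k) ((x:ℤ)-j)) := by
  have hM : (n:ℤ)-k = ((n-k:ℕ):ℤ) := by omega
  rw [hM]
  set M := n - k with hMdef
  have hMr : (M:ℝ) = (n:ℝ) - k := by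
    rw [hMdef]; push_cast [hk.le]; ring
  have e1 : ∀ j ∈ range l,
      ((n:ℝ)-x+1) * ((((l:ℝ)-1)-j) * Cb k j * Cb M (((x:ℤ)-1)-j))
        = (((l:ℝ)-1)-j) * (((x:ℝ)-j) * (Cb k j * Cb M ((x:ℤ)-j)))
          + (((l:ℝ)-1)-j) * (((j:ℝ)+1) * (Cb k ((j:ℤ)+1) * Cb M (((x:ℤ)-1)-j))) := by
    intro j hj
    rw [mem_range] at hj
    have habs := Cb_absorb M ((x:ℤ)-j)
    rw [show (x:ℤ)-(j:ℤ)-1 = ((x:ℤ)-1)-j by ring] at habs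
    push_cast at habs
    rw [hMr] at habs
    have hsucc := Cb_succ_right k j (by omega)
    linear_combination ((((l:ℝ)-1)-j) * Cb k j) * habs
      + ((((l:ℝ)-1)-j) * Cb M (((x:ℤ)-1)-j)) * hsucc
  rw [Finset.mul_sum, Finset.mul_sum, Finset.sum_congr rfl e1, Finset.sum_add_distrib]
  have e2 : ∑ j ∈ range l, ((((l:ℝ)-1)-j) * (((j:ℝ)+1) * (Cb k ((j:ℤ)+1) * Cb M (((x:ℤ)-1)-j))))
      = ∑ j ∈ range (l+1), (((l:ℝ)-j) * j * (Cb k j * Cb M ((x:ℤ)-j))) := by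
    rw [Finset.sum_range_succ' (fun j => ((l:ℝ)-j) * j * (Cb (k:ℤ) (j:ℤ) * Cb (M:ℤ) ((x:ℤ)-j))) l]
    simp only [Nat.cast_zero, mul_zero, zero_mul, add_zero]
    apply Finset.sum_congr rfl
    intro j hj
    push_cast
    rw [show (x:ℤ)-((j:ℤ)+1) = ((x:ℤ)-1)-j by ring]
    ring
  rw [e2]
  have e3 : ∑ j ∈ range l, ((((l:ℝ)-1)-j) * (((x:ℝ)-j) * (Cb k j * Cb M ((x:ℤ)-j))))
      = ∑ j ∈ range (l+1), ((((l:ℝ)-1)-j) * (((x:ℝ)-j) * (Cb k j * Cb M ((x:ℤ)-j))))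
        + ((x:ℝ)-l) * (Cb k l * Cb M ((x:ℤ)-l)) := by
    rw [Finset.sum_range_succ]
    push_cast
    ring
  have e4 : ∑ j ∈ range l, ((((l:ℝ)-1)-j) * Cb k j * Cb M ((x:ℤ)-j))
      = ∑ j ∈ range (l+1), ((((l:ℝ)-1)-j) * Cb k j * Cb M ((x:ℤ)-j))
        + (Cb k l * Cb M ((x:ℤ)-l)) := by
    rw [Finset.sum_range_succ]
    push_cast
    ring
  rw [e3, e4]
  have efin : ∑ i ∈ range (l+1), ((l:ℝ)-1) * (((l:ℝ)-i) * Cb k i * Cb ((M:ℕ):ℤ) ((x:ℤ)-i))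
      = ∑ j ∈ range (l+1), ( (((l:ℝ)-1)-j) * (((x:ℝ)-j) * (Cb k j * Cb ((M:ℕ):ℤ) ((x:ℤ)-j)))
          + ((l:ℝ)-j) * j * (Cb k j * Cb ((M:ℕ):ℤ) ((x:ℤ)-j))
          - ((x:ℝ)-l) * ((((l:ℝ)-1)-j) * Cb k j * Cb ((M:ℕ):ℤ) ((x:ℤ)-j)) ) := by
    apply Finset.sum_congr rfl
    intro j _
    ring
  rw [efin, Finset.sum_sub_distrib, Finset.sum_add_distrib, mul_add, Finset.mul_sum]
  ring

/-- The value `π(i)` of a permutation of `{1,...,n}` in 1-based indexing. -/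
def pv (n : ℕ) (π : Equiv.Perm (Fin n)) (i : ℕ) : ℕ :=
  if h : i - 1 < n then ((π ⟨i - 1, h⟩ : Fin n) : ℕ) + 1 else 0

/-- The relative rank `ρ_π(i)`: the number of `j ∈ {1,...,i}` with `π(j) ≤ π(i)`. -/
def rho (n : ℕ) (π : Equiv.Perm (Fin n)) (i : ℕ) : ℕ :=
  ((Finset.Icc 1 i).filter fun j => pv n π j ≤ pv n π i).card

/-- Extension of a sequence `s` with `s (k+1) = n - 1`. -/
def sExt (n k : ℕ) (s : ℕ → ℕ) (l : ℕ) : ℕ := if l = k + 1 then n - 1 else s l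

/-- `i` is a `(π, l, w)`-element. -/
def IsElem (n k : ℕ) (s : ℕ → ℕ) (π : Equiv.Perm (Fin n)) (l i : ℕ) : Prop :=
  sExt n k s l < i ∧ i ≤ sExt n k s (l + 1) ∧ rho n π i ≤ l

/-- `l` is a `w`-threshold of `π`. -/
def IsThreshold (n k : ℕ) (s : ℕ → ℕ) (π : Equiv.Perm (Fin n)) (l : ℕ) : Prop :=
  1 ≤ l ∧ l ≤ k ∧ ∃ i, IsElem n k s π l i

open Classical in
/-- `π` is a lucky permutation for the sequence `w = s`. -/
def Lucky (n k : ℕ) (s : ℕ → ℕ) (π : Equiv.Perm (Fin n)) : Prop :=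
  if ∃ l, IsThreshold n k s π l then
    pv n π (sInf {i | IsElem n k s π (sInf {l | IsThreshold n k s π l}) i}) ≤ k
  else pv n π n ≤ k

/-- The maps `r_l` (first argument an integer `l ≤ k`). -/
noncomputable def rr (n k : ℕ) (l : ℤ) (x : ℕ) : ℝ :=
  if l < 0 then 0
  else if l = 0 then
    1 / (x : ℝ) - (k : ℝ) / n - Cb ((n : ℤ) - x - 1) k / ((x : ℝ) * Cb n k)
      - (1 / Cb n k) * ∑ j ∈ Finset.Icc 1 x, Cb ((n : ℤ) - j - 1) ((k : ℤ) - 1) / (j : ℝ)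
  else
    ((Nat.factorial (x - l.toNat - 1) : ℝ) / (Nat.factorial x : ℝ)) *
      (1 - (1 / ((l : ℝ) * Cb n x)) *
        ∑ j ∈ Finset.range (l.toNat + 1),
          ((l : ℝ) - j) * Cb k j * Cb ((n : ℤ) - k) ((x : ℤ) - j))

/-- The constant `δ_{k,n}`. -/
noncomputable def delta (n k : ℕ) : ℝ :=
  if k = 1 then -(1 / (n : ℝ)) * ∑ j ∈ Finset.Icc 1 (n - 1), (1 : ℝ) / j
  else (Nat.factorial (n - k) : ℝ) / (Nat.factorial n : ℝ)

/-- The maps `d_l` for `0 ≤ l ≤ k`. -/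
noncomputable def d (n k : ℕ) (l x : ℕ) : ℝ :=
  if l = 0 then
    -1 + (k : ℝ) * x / n + Cb ((n : ℤ) - x - 1) k / Cb n k
      + ((x : ℝ) / Cb n k) * ∑ j ∈ Finset.Icc 1 x, Cb ((n : ℤ) - j - 1) ((k : ℤ) - 1) / (j : ℝ)
  else if l = 1 then
    -((k : ℝ) / n) - (1 / Cb n k) * ∑ j ∈ Finset.Icc 1 x, Cb ((n : ℤ) - j - 1) ((k : ℤ) - 1) / (j : ℝ)
  else
    ((k : ℝ) * (Nat.factorial x : ℝ) * (Nat.factorial (n - l - x) : ℝ) /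
        ((l : ℝ) * ((l : ℝ) - 1) * (Nat.factorial n : ℝ))) *
      ∑ j ∈ Finset.range (l - 1), Cb ((k : ℤ) - 1) j * Cb ((n : ℤ) - k) ((x : ℤ) + l - j - 1)

/-- The maps `c_l(x) = d_l(x - l)`. -/
noncomputable def c (n k l x : ℕ) : ℝ := d n k l (x - l)

/-- The constant `ξ_{k,n}`. -/
noncomputable def xi (n k : ℕ) : ℝ :=
  (k : ℝ) * (Nat.factorial (n - k - 1) : ℝ) / (Nat.factorial n : ℝ)

/-- `w` (given as a 1-indexed function) is a word in `X^{(k-l)}`, i.e. its `j`-th letter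
belongs to `X_{l+j} = {l+j, ..., n-1}` for `1 ≤ j ≤ k - l`. -/
def memX (n k l : ℕ) (w : ℕ → ℕ) : Prop :=
  ∀ j ∈ Finset.Icc 1 (k - l), l + j ≤ w j ∧ w j ≤ n - 1

/-- The left-shift operator removing the first `l` letters of a word. -/
def shift (l : ℕ) (w : ℕ → ℕ) : ℕ → ℕ := fun j => w (l + j)

/-- The maps `R_{l,j}`. -/
noncomputable def Rmap (n k l : ℕ) (w : ℕ → ℕ) (j : ℕ) : ℝ :=
  if 1 ≤ j ∧ j ≤ k - l then
    rr n k ((l : ℤ) + j - 1) (w j)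
      - rr n k ((l : ℤ) + j - 1) (if j = k - l then n - 1 else w (j + 1))
  else 0

/-- The maps `Γ_{l,j,j'}`. -/
noncomputable def Gam (n k l j j' : ℕ) (w : ℕ → ℕ) : ℝ :=
  if 1 ≤ j ∧ j ≤ j' ∧ j' ≤ k - l then
    ∏ t ∈ Finset.Icc j j', ((w t : ℝ) - l - t + 1)
  else 1

/-- The maps `T_l`. -/
noncomputable def Tmap (n k l : ℕ) (w : ℕ → ℕ) : ℝ :=
  (∑ j ∈ Finset.Icc 1 (k - l), Rmap n k l w j * Gam n k l 1 j w)
    + xi n k * Gam n k l 1 (k - l) w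

/-- The maps `D_l(w) = r_{l-1}(x_1) - T_l(w)`, with `x_1 := n-1` when `l = k`. -/
noncomputable def Dmap (n k l : ℕ) (w : ℕ → ℕ) : ℝ :=
  rr n k ((l : ℤ) - 1) (if l = k then n - 1 else w 1) - Tmap n k l w

/-- The maps `F_{l,w}(x) = -c_{l-1}(x) - x·D_l(w)`. -/
noncomputable def Fmap (n k l : ℕ) (w : ℕ → ℕ) (x : ℕ) : ℝ :=
  -(c n k (l - 1) x) - (x : ℝ) * Dmap n k l w

/-- The maps `a_l`. -/
noncomputable def amap (n k l x : ℕ) : ℝ :=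
  (1 / Cb n x) * ∑ j ∈ Finset.range (l + 1), Cb k j * Cb ((n : ℤ) - k) ((x : ℤ) - j)

/-- The maps `b_l`. -/
noncomputable def bmap (n k l x : ℕ) : ℝ :=
  (1 / ((l : ℝ) * Cb n x)) *
    ∑ j ∈ Finset.range (l + 1), (j : ℝ) * Cb k j * Cb ((n : ℤ) - k) ((x : ℤ) - j)

/-- `π ∈ S(l0, i0)`: `π` is lucky for `s`, `l0` is the smallest `s`-threshold of `π`,
and `i0` is the smallest `(π, l0, s)`-element. -/
def SMem (n k : ℕ) (s : ℕ → ℕ) (l0 i0 : ℕ) (π : Equiv.Perm (Fin n)) : Prop :=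
  Lucky n k s π ∧ IsLeast {l | IsThreshold n k s π l} l0 ∧
    IsLeast {i | IsElem n k s π l0 i} i0

/-- `π ∈ S(Y, Y', l0, i0)`. -/
def SYYMem (n k : ℕ) (s : ℕ → ℕ) (Y Y' : Finset ℕ) (l0 i0 : ℕ) (π : Equiv.Perm (Fin n)) :
    Prop :=
  SMem n k s l0 i0 π ∧ ((Finset.Icc 1 i0).image (pv n π)) ∩ Finset.Icc 1 k = Y ∧
    ((Finset.Icc 1 i0).image (pv n π)) ∩ Finset.Icc (k + 1) n = Y'

lemma rr_zero (n k x : ℕ) :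
    rr n k 0 x = 1 / (x : ℝ) - (k : ℝ) / n - Cb ((n : ℤ) - x - 1) k / ((x : ℝ) * Cb n k)
      - (1 / Cb n k) * ∑ j ∈ Finset.Icc 1 x, Cb ((n : ℤ) - j - 1) ((k : ℤ) - 1) / (j : ℝ) := by
  unfold rr
  norm_num

lemma rr_pos (n k l x : ℕ) (hl : 1 ≤ l) :
    rr n k l x = ((Nat.factorial (x - l - 1) : ℝ) / (Nat.factorial x : ℝ)) *
      (1 - (1 / ((l : ℝ) * Cb n x)) *
        ∑ j ∈ Finset.range (l + 1), ((l : ℝ) - (j : ℝ)) * Cb k j * Cb ((n : ℤ) - k) ((x : ℤ) - j)) := by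
  unfold rr
  rw [if_neg (by omega), if_neg (by omega)]
  simp only [Int.toNat_natCast]
  push_cast
  ring

theorem r_rec (n k : ℕ) (hk : 1 ≤ k) (hkn : k < n) :
    ∀ l : ℕ, l ≤ k → ∀ x ∈ Finset.Icc (l + 1) n,
      (l : ℝ) * rr n k (l : ℤ) x =
        rr n k ((l : ℤ) - 1) (x - 1) - rr n k ((l : ℤ) - 1) x := by
  intro l hlk x hx
  rw [Finset.mem_Icc] at hx
  obtain ⟨hx1, hx2⟩ := hx
  rcases Nat.eq_zero_or_pos l with rfl | hl1
  · norm_num [rr]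
  rcases eq_or_lt_of_le (show 1 ≤ l from hl1) with hl1' | hl2
  · -- l = 1
    have hl : l = 1 := hl1'.symm
    subst hl
    rw [rr_pos n k 1 x (le_refl 1)]
    rw [show ((1:ℕ):ℤ) - 1 = (0:ℤ) by norm_num]
    rw [rr_zero n k (x-1), rr_zero n k x]
    have hP := Cb_pascal n k x hk hx2
    have hProd := Cb_prod n k x hkn.le hx2
    have hsplit := Finset.sum_Icc_succ_top (a := 1) (b := x - 1) (by omega)
      (fun j => Cb ((n:ℤ) - j - 1) ((k:ℤ) - 1) / (j : ℝ))
    rw [show x - 1 + 1 = x by omega] at hsplit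
    beta_reduce at hsplit
    have hcast1 : ((x-1:ℕ):ℤ) = (x:ℤ) - 1 := by omega
    have hcast1r : ((x-1:ℕ):ℝ) = (x:ℝ) - 1 := by
      push_cast [Nat.cast_sub (show 1 ≤ x by omega)]; ring
    simp only [hcast1, hcast1r]
    rw [Finset.sum_range_succ, Finset.sum_range_one]
    norm_num
    have hck : 0 < Cb n k := Cb_pos n k hkn.le
    have hcx : 0 < Cb n x := Cb_pos n x hx2
    have hk0 : Cb (k:ℤ) 0 = 1 := by
      rw [show (0:ℤ) = ((0:ℕ):ℤ) by norm_num, Cb_nat]; simp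
    have hsub1 : Cb ((n:ℤ)-x-1) k = Cb ((n:ℤ)-x) k - Cb ((n:ℤ)-x-1) ((k:ℤ)-1) := by
      linarith [hP]
    have hsub2 : Cb ((n:ℤ)-k) x = Cb ((n:ℤ)-x) k * Cb n x / Cb n k := by
      rw [eq_div_iff hck.ne']; linarith [hProd]
    rw [show (n:ℤ) - ((x:ℤ)-1) - 1 = (n:ℤ)-(x:ℤ) by ring, hsplit, hsub1, hsub2, hk0]
    have hfac : (x.factorial : ℝ) = (x:ℝ) * ((x:ℝ)-1) * ((x-1-1).factorial : ℝ) := by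
      have h1 : x * (x-1).factorial = x.factorial := Nat.mul_factorial_pred (by omega)
      have h2 : (x-1) * ((x-1)-1).factorial = (x-1).factorial := Nat.mul_factorial_pred (by omega)
      have h1' : (x:ℝ) * ((x-1).factorial : ℝ) = (x.factorial : ℝ) := by exact_mod_cast h1
      have h2' : ((x-1:ℕ):ℝ) * (((x-1)-1).factorial : ℝ) = ((x-1).factorial : ℝ) := by
        exact_mod_cast h2
      rw [hcast1r] at h2'
      rw [← h1', ← h2']
      ring
    rw [hfac]
    have hxne : (x:ℝ) ≠ 0 := Nat.cast_ne_zero.mpr (by omega)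
    have hx1ne : (x:ℝ) - 1 ≠ 0 := by
      have : (1:ℝ) < x := by exact_mod_cast (by omega : 1 < x)
      linarith
    have hnne : (n:ℝ) ≠ 0 := Nat.cast_ne_zero.mpr (by omega)
    have hfne : ((x-1-1).factorial : ℝ) ≠ 0 := by positivity
    field_simp
    ring
  · -- l ≥ 2
    have h2l : 2 ≤ l := hl2
    rw [rr_pos n k l x hl1]
    rw [show ((l:ℕ):ℤ) - 1 = ((l-1:ℕ):ℤ) by omega]
    rw [rr_pos n k (l-1) (x-1) (by omega), rr_pos n k (l-1) x (by omega)]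
    have hcast1 : ((x-1:ℕ):ℤ) = (x:ℤ) - 1 := by omega
    have hcast2 : ((l-1:ℕ):ℝ) = (l:ℝ) - 1 := by
      push_cast [Nat.cast_sub (show 1 ≤ l by omega)]; ring
    simp only [hcast1, hcast2, show l - 1 + 1 = l by omega,
      show x - (l-1) - 1 = x - l by omega, show x - 1 - (l-1) - 1 = x - l - 1 by omega]
    have hT := sumT n k l x hkn hl1 hlk
    have hxr : (x:ℝ) ≤ n := by exact_mod_cast hx2
    have hnx : (0:ℝ) < (n:ℝ) - x + 1 := by linarith
    have hS1 : ∑ j ∈ Finset.range l, (((l:ℝ)-1) - j) * Cb k j * Cb ((n:ℤ)-k) (((x:ℤ)-1) - j)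
        = (((l:ℝ)-1) * ∑ j ∈ Finset.range (l+1), (((l:ℝ)-j) * Cb k j * Cb ((n:ℤ)-k) ((x:ℤ)-j))
            + ((x:ℝ)-l) * ∑ j ∈ Finset.range l, ((((l:ℝ)-1)-j) * Cb k j * Cb ((n:ℤ)-k) ((x:ℤ)-j)))
          / ((n:ℝ) - x + 1) := by
      rw [eq_div_iff hnx.ne']
      linarith [hT]
    have hc1 : Cb n ((x:ℤ)-1) = (x:ℝ) * Cb n x / ((n:ℝ) - x + 1) := by
      have habs := Cb_absorb n (x:ℤ)
      push_cast at habs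
      rw [eq_div_iff hnx.ne']
      linarith [habs]
    rw [hS1, hc1]
    have hF1 : (x.factorial : ℝ) = (x:ℝ) * ((x-1).factorial : ℝ) := by
      exact_mod_cast (Nat.mul_factorial_pred (show x ≠ 0 by omega)).symm
    have hF3 : ((x-l).factorial : ℝ) = ((x:ℝ) - l) * ((x-l-1).factorial : ℝ) := by
      have h := Nat.mul_factorial_pred (show x - l ≠ 0 by omega)
      have h' : ((x-l:ℕ):ℝ) * (((x-l)-1).factorial : ℝ) = ((x-l).factorial : ℝ) := by
        exact_mod_cast h
      rw [Nat.cast_sub (show l ≤ x by omega)] at h'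
      exact h'.symm
    rw [hF1, hF3]
    have hxne : (x:ℝ) ≠ 0 := Nat.cast_ne_zero.mpr (by omega)
    have hlne : (l:ℝ) ≠ 0 := Nat.cast_ne_zero.mpr (by omega)
    have hl1ne : (l:ℝ) - 1 ≠ 0 := by
      have : (1:ℝ) < l := by exact_mod_cast (by omega : 1 < l)
      linarith
    have hcx : 0 < Cb n x := Cb_pos n x hx2
    have hf2ne : ((x-1).factorial : ℝ) ≠ 0 := by positivity
    have hf0ne : ((x-l-1).factorial : ℝ) ≠ 0 := by positivity
    field_simp
    ring
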